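/- If a self-reciprocal Littlewood polynomial P(z) = Σ_{j=0}^n a_j z^j with a_j ∈ {-1,1}, a_j = a_{n-j} for all j, and n ≥ 1, then P has at least one zero on the unit circle |z| = 1. -/

import Mathlib

open Finset Complex

private lemma slc_geom_sum_zero {N : ℕ} (u : ℂ) (hu : u ^ N = 1) (hne : u ≠ 1) :
    ∑ j ∈ range N, u ^ j = 0 := by
  rw [geom_sum_eq hne, hu]; simp

private lemma slc_pow_root_eq_one_iff {N : ℕ} (hN : 0 < N) (t : ℕ) :
    Complex.exp (((2 * Real.pi / N : ℝ) : ℂ) * I) ^ t = 1 ↔ (N : ℤ) ∣ (t : ℤ) := by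
  have harg : (((2 * Real.pi / N : ℝ) : ℂ) * I) = 2 * Real.pi * I / N := by
    push_cast; ring
  rw [harg, ← Complex.exp_nat_mul, Complex.exp_eq_one_iff]
  have hNne : (N : ℂ) ≠ 0 := Nat.cast_ne_zero.mpr hN.ne'
  have hpi : (Real.pi : ℂ) ≠ 0 := by exact_mod_cast Real.pi_ne_zero
  have hne2 : (2 * (Real.pi:ℂ) * I) ≠ 0 := by
    simp only [mul_ne_zero_iff]
    exact ⟨⟨two_ne_zero, hpi⟩, Complex.I_ne_zero⟩
  constructor
  · rintro ⟨z, hz⟩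
    refine ⟨z, ?_⟩
    have h2 : (t : ℂ) * (2 * Real.pi * I) = z * (2 * Real.pi * I) * N := by
      field_simp at hz
      linear_combination (2 * (Real.pi:ℂ) * I) * hz
    have h3 : (t : ℂ) = (N : ℂ) * z :=
      mul_right_cancel₀ hne2 (by linear_combination h2)
    exact_mod_cast h3
  · rintro ⟨z, hz⟩
    refine ⟨z, ?_⟩
    have ht : (t : ℂ) = (N : ℂ) * z := by exact_mod_cast hz
    rw [ht]
    field_simp

private lemma slc_real_on_circle (m : ℕ) (a : ℕ → ℝ) (hsr : ∀ j ≤ 2*m, a j = a (2*m - j)) (θ : ℝ) :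
    (((Complex.exp (-(m:ℂ) * θ * I) * ∑ k ∈ range (2*m+1), (a k : ℂ) * Complex.exp ((θ:ℂ) * I) ^ k).re : ℝ) : ℂ)
    = Complex.exp (-(m:ℂ) * θ * I) * ∑ k ∈ range (2*m+1), (a k : ℂ) * Complex.exp ((θ:ℂ) * I) ^ k := by
  rw [← Complex.conj_eq_iff_re]
  have hinv : Complex.exp (-(θ:ℂ)*I) * Complex.exp ((θ:ℂ)*I) = 1 := by
    rw [← Complex.exp_add]; simp
  have hconj1 : (starRingEnd ℂ) (Complex.exp ((θ:ℂ) * I)) = Complex.exp (-(θ:ℂ)*I) := by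
    rw [← Complex.exp_conj]; congr 1; simp
  have hconj2 : (starRingEnd ℂ) (Complex.exp (-(m:ℂ) * θ * I)) = Complex.exp ((m:ℂ) * θ * I) := by
    rw [← Complex.exp_conj]; congr 1; simp
  rw [map_mul, map_sum, hconj2]
  have hsum : ∑ k ∈ range (2*m+1), (starRingEnd ℂ) ((a k : ℂ) * Complex.exp ((θ:ℂ) * I) ^ k)
      = ∑ k ∈ range (2*m+1), (a k : ℂ) * Complex.exp (-(θ:ℂ)*I) ^ k := by
    apply Finset.sum_congr rfl
    intro k _
    rw [map_mul, map_pow, hconj1, Complex.conj_ofReal]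
  rw [hsum]
  have hrefl := Finset.sum_range_reflect (fun k => (a k : ℂ) * Complex.exp (-(θ:ℂ)*I) ^ k) (2*m+1)
  simp only [Nat.add_sub_cancel] at hrefl
  rw [← hrefl]
  have hpt : ∀ k ∈ range (2*m+1), (a (2*m - k) : ℂ) * Complex.exp (-(θ:ℂ)*I) ^ (2*m - k)
      = Complex.exp (-(θ:ℂ)*I) ^ (2*m) * ((a k : ℂ) * Complex.exp ((θ:ℂ)*I) ^ k) := by
    intro k hk
    have hk' : k ≤ 2*m := Nat.lt_succ_iff.mp (Finset.mem_range.mp hk)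
    have ha' : a (2*m - k) = a k := (hsr k hk').symm
    have hp : Complex.exp (-(θ:ℂ)*I)^(2*m-k) = Complex.exp (-(θ:ℂ)*I)^(2*m) * Complex.exp ((θ:ℂ)*I)^k := by
      calc Complex.exp (-(θ:ℂ)*I)^(2*m-k)
          = Complex.exp (-(θ:ℂ)*I)^(2*m-k) * (Complex.exp (-(θ:ℂ)*I)^k * Complex.exp ((θ:ℂ)*I)^k) := by
            rw [← mul_pow, hinv, one_pow, mul_one]
        _ = (Complex.exp (-(θ:ℂ)*I)^(2*m-k) * Complex.exp (-(θ:ℂ)*I)^k) * Complex.exp ((θ:ℂ)*I)^k := by ring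
        _ = Complex.exp (-(θ:ℂ)*I)^(2*m) * Complex.exp ((θ:ℂ)*I)^k := by
            rw [← pow_add, Nat.sub_add_cancel hk']
    rw [ha', hp]; ring
  rw [Finset.sum_congr rfl hpt, ← Finset.mul_sum, ← mul_assoc]
  congr 1
  rw [← Complex.exp_nat_mul, ← Complex.exp_add]
  congr 1
  push_cast
  ring

/-- A self-reciprocal Littlewood polynomial of degree `n ≥ 1` has a zero on the unit circle. -/
theorem selfReciprocal_littlewood_has_unimodular_zero
    (n : ℕ) (hn : 1 ≤ n) (a : ℕ → ℝ)
    (ha : ∀ j ≤ n, a j = 1 ∨ a j = -1)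
    (hsr : ∀ j ≤ n, a j = a (n - j)) :
    ∃ z : ℂ, ‖z‖ = 1 ∧ ∑ j ∈ Finset.range (n + 1), (a j : ℂ) * z ^ j = 0 := by
  rcases Nat.even_or_odd n with heven | hodd
  · -- EVEN CASE
    obtain ⟨m, hm'⟩ := heven
    have hm : n = 2 * m := by omega
    have hm1 : 1 ≤ m := by omega
    by_contra hcon
    push_neg at hcon
    set N : ℕ := n + 1 with hN
    have hN0 : 0 < N := Nat.succ_pos n
    have hNR : (0:ℝ) < N := by exact_mod_cast hN0
    set ω : ℂ := Complex.exp (((2 * Real.pi / N : ℝ) : ℂ) * I) with hω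
    have hωN : ω ^ N = 1 := (slc_pow_root_eq_one_iff hN0 N).mpr dvd_rfl
    set F : ℝ → ℝ := fun θ =>
      (Complex.exp (-(m:ℂ) * θ * I) * ∑ k ∈ range (n+1), (a k : ℂ) * Complex.exp ((θ:ℂ) * I) ^ k).re
      with hFdef
    have hFre : ∀ θ : ℝ, ((F θ : ℝ) : ℂ)
        = Complex.exp (-(m:ℂ) * θ * I) * ∑ k ∈ range (n+1), (a k : ℂ) * Complex.exp ((θ:ℂ) * I) ^ k := by
      intro θ
      have := slc_real_on_circle m a (by rw [← hm]; exact hsr) θ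
      rw [← hm] at this
      exact this
    -- F never vanishes
    have hFne : ∀ θ : ℝ, F θ ≠ 0 := by
      intro θ h0
      apply hcon (Complex.exp ((θ:ℂ) * I)) (Complex.norm_exp_ofReal_mul_I θ)
      have h1 := hFre θ
      rw [h0] at h1
      have h2 : Complex.exp (-(m:ℂ) * θ * I) ≠ 0 := Complex.exp_ne_zero _
      simp only [Complex.ofReal_zero] at h1
      rcases mul_eq_zero.mp h1.symm with h | h
      · exact absurd h h2
      · exact h
    -- F continuous
    have hFcont : Continuous F := by
      apply Complex.continuous_re.comp
      apply Continuous.mul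
      · exact Complex.continuous_exp.comp (by fun_prop)
      · apply continuous_finset_sum
        intro k _
        exact continuous_const.mul ((Complex.continuous_exp.comp (by fun_prop)).pow k)
    -- constant sign
    obtain ⟨s, hs, hspos⟩ : ∃ s : ℝ, (s = 1 ∨ s = -1) ∧ ∀ θ : ℝ, 0 < s * F θ := by
      rcases lt_or_gt_of_ne (hFne 0) with h0 | h0
      · refine ⟨-1, Or.inr rfl, fun θ => ?_⟩
        rcases lt_or_gt_of_ne (hFne θ) with h1 | h1
        · nlinarith
        · exfalso
          have hsub := intermediate_value_uIcc (a := 0) (b := θ) (f := F) hFcont.continuousOn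
          have h0m : (0:ℝ) ∈ Set.uIcc (F 0) (F θ) := by
            rw [Set.mem_uIcc]; left; constructor <;> linarith
          obtain ⟨t, _, ht⟩ := hsub h0m
          exact hFne t ht
      · refine ⟨1, Or.inl rfl, fun θ => ?_⟩
        rcases lt_or_gt_of_ne (hFne θ) with h1 | h1
        · exfalso
          have hsub := intermediate_value_uIcc (a := 0) (b := θ) (f := F) hFcont.continuousOn
          have h0m : (0:ℝ) ∈ Set.uIcc (F 0) (F θ) := by
            rw [Set.mem_uIcc]; right; constructor <;> linarith
          obtain ⟨t, _, ht⟩ := hsub h0m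
          exact hFne t ht
        · nlinarith
    -- sample points
    set θp : ℕ → ℝ := fun j => 2 * Real.pi * j / N with hθp
    have hexpθ : ∀ j : ℕ, Complex.exp ((θp j : ℂ) * I) = ω ^ j := by
      intro j
      rw [hω, ← Complex.exp_nat_mul]
      congr 1
      simp only [hθp]
      push_cast
      ring
    -- key identity
    have hkey : ∀ j : ℕ, ((F (θp j) : ℝ) : ℂ) * ω ^ (m*j)
        = ∑ k ∈ range (n+1), (a k : ℂ) * (ω ^ k) ^ j := by
      intro j
      rw [hFre (θp j)]
      have h1 : Complex.exp (-(m:ℂ) * (θp j) * I) * ω ^ (m*j) = 1 := by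
        rw [hω, ← Complex.exp_nat_mul, ← Complex.exp_add]
        rw [show (-(m:ℂ) * (θp j) * I + (m*j : ℕ) * (((2 * Real.pi / N : ℝ) : ℂ) * I)) = 0 by
          simp only [hθp]
          push_cast
          ring]
        exact Complex.exp_zero
      calc Complex.exp (-(m:ℂ) * (θp j) * I) * (∑ k ∈ range (n+1), (a k : ℂ) * Complex.exp (((θp j):ℂ) * I) ^ k) * ω ^ (m*j)
          = (Complex.exp (-(m:ℂ) * (θp j) * I) * ω ^ (m*j)) * (∑ k ∈ range (n+1), (a k : ℂ) * Complex.exp (((θp j):ℂ) * I) ^ k) := by ring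
        _ = ∑ k ∈ range (n+1), (a k : ℂ) * Complex.exp (((θp j):ℂ) * I) ^ k := by rw [h1, one_mul]
        _ = ∑ k ∈ range (n+1), (a k : ℂ) * (ω ^ k) ^ j := by
            apply Finset.sum_congr rfl
            intro k _
            rw [hexpθ j, ← pow_mul, ← pow_mul, Nat.mul_comm j k]
    -- geometric sum evaluations
    have hωe : ∀ t : ℕ, (ω ^ t) ^ N = 1 := by
      intro t; rw [← pow_mul, mul_comm, pow_mul, hωN, one_pow]
    have hgeo0 : ∀ t : ℕ, ¬ ((N:ℤ) ∣ (t:ℤ)) → ∑ j ∈ range N, (ω ^ t) ^ j = 0 := by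
      intro t ht
      apply slc_geom_sum_zero _ (hωe t)
      intro h1
      rw [hω] at h1
      exact ht ((slc_pow_root_eq_one_iff hN0 t).mp h1)
    have hgeo1 : ∀ t : ℕ, ((N:ℤ) ∣ (t:ℤ)) → ∑ j ∈ range N, (ω ^ t) ^ j = N := by
      intro t ht
      have h1 : ω ^ t = 1 := by rw [hω]; exact (slc_pow_root_eq_one_iff hN0 t).mpr ht
      rw [h1]
      simp
    -- sum A
    have hA : ∑ j ∈ range N, ((F (θp j) : ℝ) : ℂ) * ω ^ (m*j) = (N:ℂ) * (a 0) := by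
      calc ∑ j ∈ range N, ((F (θp j):ℝ):ℂ) * ω^(m*j)
          = ∑ j ∈ range N, ∑ k ∈ range (n+1), (a k:ℂ) * (ω^k)^j :=
            Finset.sum_congr rfl (fun j _ => hkey j)
        _ = ∑ k ∈ range (n+1), (a k:ℂ) * ∑ j ∈ range N, (ω^k)^j := by
            rw [Finset.sum_comm]
            simp [Finset.mul_sum]
        _ = (N:ℂ) * a 0 := by
            rw [Finset.sum_eq_single_of_mem 0 (by simp)]
            · rw [hgeo1 0 (by simp)]; ring
            · intro k hk hkne
              rw [hgeo0 k ?_, mul_zero]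
              intro hdvd
              have hk' : k ≤ n := Nat.lt_succ_iff.mp (Finset.mem_range.mp hk)
              have hlt : (k:ℤ).natAbs < ((N:ℕ):ℤ).natAbs := by
                simp only [Int.natAbs_natCast]
                omega
              have h0 := Int.eq_zero_of_dvd_of_natAbs_lt_natAbs hdvd hlt
              exact hkne (by exact_mod_cast h0)
    -- product of eta and omega powers is 1
    have hηω : ∀ j : ℕ, ω^(m*j) * (ω^n)^(m*j) = 1 := by
      intro j
      have h1 : ω * ω^n = 1 := by
        rw [← pow_succ']
        rw [show n + 1 = N from rfl]
        exact hωN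
      rw [← mul_pow, h1, one_pow]
    -- pointwise identity for C
    have hC1 : ∀ j : ℕ, ((F (θp j):ℝ):ℂ) = ∑ k ∈ range (n+1), (a k:ℂ) * (ω^(n*m+k))^j := by
      intro j
      calc ((F (θp j):ℝ):ℂ) = (((F (θp j):ℝ):ℂ) * ω^(m*j)) * (ω^n)^(m*j) := by
            rw [mul_assoc, hηω j, mul_one]
        _ = (∑ k ∈ range (n+1), (a k:ℂ) * (ω^k)^j) * (ω^(n*m))^j := by
            rw [hkey j, ← pow_mul, ← pow_mul, Nat.mul_assoc]
        _ = ∑ k ∈ range (n+1), (a k:ℂ) * (ω^(n*m+k))^j := by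
            rw [Finset.sum_mul]
            apply Finset.sum_congr rfl
            intro k _
            rw [mul_assoc, ← mul_pow, ← pow_add, Nat.add_comm]
    -- pointwise identity for B
    have hB1 : ∀ j : ℕ, ((F (θp j):ℝ):ℂ) * (ω^(n*m))^j
        = ∑ k ∈ range (n+1), (a k:ℂ) * (ω^(n*n+k))^j := by
      intro j
      rw [hC1 j, Finset.sum_mul]
      apply Finset.sum_congr rfl
      intro k _
      rw [mul_assoc, ← mul_pow, ← pow_add]
      congr 3
      rw [hm]; ring
    -- sum C
    have hC : ∑ j ∈ range N, ((F (θp j):ℝ):ℂ) = (N:ℂ) * (a m) := by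
      calc ∑ j ∈ range N, ((F (θp j):ℝ):ℂ)
          = ∑ j ∈ range N, ∑ k ∈ range (n+1), (a k:ℂ) * (ω^(n*m+k))^j :=
            Finset.sum_congr rfl (fun j _ => hC1 j)
        _ = ∑ k ∈ range (n+1), (a k:ℂ) * ∑ j ∈ range N, (ω^(n*m+k))^j := by
            rw [Finset.sum_comm]
            simp [Finset.mul_sum]
        _ = (N:ℂ) * a m := by
            rw [Finset.sum_eq_single_of_mem m (by simp; omega)]
            · rw [hgeo1 (n*m+m) ⟨m, by push_cast [hN]; ring⟩]; ring
            · intro k hk hkne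
              rw [hgeo0 (n*m+k) ?_, mul_zero]
              intro hdvd
              have hk' : k ≤ n := Nat.lt_succ_iff.mp (Finset.mem_range.mp hk)
              have h3 : (k:ℤ) - m = ((n*m+k:ℕ):ℤ) - m * N := by push_cast [hN]; ring
              have hd2 : ((N:ℕ):ℤ) ∣ ((k:ℤ) - m) := by
                rw [h3]
                exact dvd_sub hdvd (dvd_mul_left _ _)
              have hlt : ((k:ℤ) - m).natAbs < ((N:ℕ):ℤ).natAbs := by omega
              have h0 := Int.eq_zero_of_dvd_of_natAbs_lt_natAbs hd2 hlt
              exact hkne (by omega)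
    -- sum B
    have hB : ∑ j ∈ range N, ((F (θp j):ℝ):ℂ) * (ω^(n*m))^j = (N:ℂ) * (a n) := by
      calc ∑ j ∈ range N, ((F (θp j):ℝ):ℂ) * (ω^(n*m))^j
          = ∑ j ∈ range N, ∑ k ∈ range (n+1), (a k:ℂ) * (ω^(n*n+k))^j :=
            Finset.sum_congr rfl (fun j _ => hB1 j)
        _ = ∑ k ∈ range (n+1), (a k:ℂ) * ∑ j ∈ range N, (ω^(n*n+k))^j := by
            rw [Finset.sum_comm]
            simp [Finset.mul_sum]
        _ = (N:ℂ) * a n := by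
            rw [Finset.sum_eq_single_of_mem n (by simp)]
            · rw [hgeo1 (n*n+n) ⟨n, by push_cast [hN]; ring⟩]; ring
            · intro k hk hkne
              rw [hgeo0 (n*n+k) ?_, mul_zero]
              intro hdvd
              have hk' : k ≤ n := Nat.lt_succ_iff.mp (Finset.mem_range.mp hk)
              have h3 : (k:ℤ) - n = ((n*n+k:ℕ):ℤ) - n * N := by push_cast [hN]; ring
              have hd2 : ((N:ℕ):ℤ) ∣ ((k:ℤ) - n) := by
                rw [h3]
                exact dvd_sub hdvd (dvd_mul_left _ _)
              have hlt : ((k:ℤ) - n).natAbs < ((N:ℕ):ℤ).natAbs := by omega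
              have h0 := Int.eq_zero_of_dvd_of_natAbs_lt_natAbs hd2 hlt
              exact hkne (by omega)
    -- eta power is conjugate of omega power
    set r : ℕ → ℝ := fun j => (ω^(m*j)).re with hrdef
    have habsω : ∀ j : ℕ, ‖ω^(m*j)‖ = 1 := by
      intro j
      rw [norm_pow, hω, Complex.norm_exp_ofReal_mul_I, one_pow]
    have hconjη : ∀ j : ℕ, (ω^(n*m))^j = (starRingEnd ℂ) (ω^(m*j)) := by
      intro j
      rw [← Complex.inv_eq_conj (habsω j)]
      apply eq_inv_of_mul_eq_one_left
      rw [← pow_mul, ← pow_add,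
        show n*m*j + m*j = N*(m*j) by rw [hN]; ring,
        pow_mul, hωN, one_pow]
    -- real versions
    have hCr : ∑ j ∈ range N, F (θp j) = N * a m := by exact_mod_cast hC
    have hABr : ∑ j ∈ range N, F (θp j) * (2 * r j) = N * a 0 + N * a n := by
      have h4 : ∑ j ∈ range N, ((F (θp j):ℝ):ℂ) * (((2 * r j : ℝ)):ℂ)
          = (N:ℂ)*(a 0) + (N:ℂ)*(a n) := by
        calc ∑ j ∈ range N, ((F (θp j):ℝ):ℂ) * (((2 * r j : ℝ)):ℂ)
            = ∑ j ∈ range N, ((F (θp j):ℝ):ℂ) * (ω^(m*j) + (ω^(n*m))^j) := by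
              apply Finset.sum_congr rfl
              intro j _
              congr 1
              rw [hconjη j, Complex.add_conj (ω^(m*j))]
          _ = (∑ j ∈ range N, ((F (θp j):ℝ):ℂ) * ω^(m*j))
              + ∑ j ∈ range N, ((F (θp j):ℝ):ℂ) * (ω^(n*m))^j := by
              rw [← Finset.sum_add_distrib]
              apply Finset.sum_congr rfl
              intro j _
              ring
          _ = (N:ℂ)*(a 0) + (N:ℂ)*(a n) := by rw [hA, hB]
      exact_mod_cast h4
    have han : a n = a 0 := by
      have := hsr 0 (Nat.zero_le n)
      simpa using this.symm
    have hABr2 : ∑ j ∈ range N, F (θp j) * r j = N * a 0 := by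
      have h5 : ∑ j ∈ range N, F (θp j) * (2 * r j)
          = 2 * ∑ j ∈ range N, F (θp j) * r j := by
        rw [Finset.mul_sum]
        apply Finset.sum_congr rfl
        intro j _
        ring
      rw [h5, han] at hABr
      linarith
    -- bounds on r
    have hrle : ∀ j : ℕ, |r j| ≤ 1 := by
      intro j
      calc |r j| ≤ ‖ω^(m*j)‖ := Complex.abs_re_le_norm _
        _ = 1 := habsω j
    have hr1 : |r 1| < 1 := by
      have him : (ω^(m*1)).im ≠ 0 := by
        rw [mul_one]
        have hωm : ω^m = Complex.exp (((2*Real.pi*m/N : ℝ):ℂ) * I) := by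
          rw [hω, ← Complex.exp_nat_mul]
          congr 1
          push_cast
          ring
        rw [hωm, Complex.exp_ofReal_mul_I_im]
        apply ne_of_gt
        apply Real.sin_pos_of_pos_of_lt_pi
        · have := Real.pi_pos
          positivity
        · rw [div_lt_iff₀ hNR]
          have hπ := Real.pi_pos
          have hNval : (N:ℝ) = 2*m+1 := by
            rw [hN, hm]; push_cast; ring
          rw [hNval]
          nlinarith
      calc |r 1| < ‖ω^(m*1)‖ := Complex.abs_re_lt_norm.mpr him
        _ = 1 := habsω 1
    -- final inequality
    have hg : ∀ j : ℕ, 0 < s * F (θp j) := fun j => hspos _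
    have hT : ∑ j ∈ range N, s * F (θp j) = s * (N * a m) := by
      rw [← Finset.mul_sum, hCr]
    have hT2 : ∑ j ∈ range N, s * F (θp j) * r j = s * (N * a 0) := by
      calc ∑ j ∈ range N, s * F (θp j) * r j = s * ∑ j ∈ range N, F (θp j) * r j := by
            rw [Finset.mul_sum]
            apply Finset.sum_congr rfl
            intro j _
            ring
        _ = s * (N * a 0) := by rw [hABr2]
    have hpos : 0 < ∑ j ∈ range N, s * F (θp j) :=
      Finset.sum_pos (fun j _ => hg j) (Finset.nonempty_range_iff.mpr hN0.ne')
    have habsm : |s * ((N:ℝ) * a m)| = N := by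
      rcases hs with h|h <;> rcases ha m (by omega) with h2|h2 <;>
        rw [h, h2] <;> simp [abs_of_pos hNR]
    have hTN : ∑ j ∈ range N, s * F (θp j) = N := by
      rw [hT] at hpos ⊢
      calc s * ((N:ℝ) * a m) = |s * ((N:ℝ) * a m)| := (abs_of_pos hpos).symm
        _ = N := habsm
    have habs0 : |s * ((N:ℝ) * a 0)| = N := by
      rcases hs with h|h <;> rcases ha 0 (by omega) with h2|h2 <;>
        rw [h, h2] <;> simp [abs_of_pos hNR]
    have h5 : (N:ℝ) ≤ ∑ j ∈ range N, (s * F (θp j)) * |r j| := by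
      calc (N:ℝ) = |∑ j ∈ range N, s * F (θp j) * r j| := by rw [hT2, habs0]
        _ ≤ ∑ j ∈ range N, |s * F (θp j) * r j| := Finset.abs_sum_le_sum_abs _ _
        _ = ∑ j ∈ range N, (s * F (θp j)) * |r j| := by
            apply Finset.sum_congr rfl
            intro j _
            rw [abs_mul, abs_of_pos (hg j)]
    have h6 : ∑ j ∈ range N, (s * F (θp j)) * |r j| < ∑ j ∈ range N, s * F (θp j) := by
      apply Finset.sum_lt_sum
      · intro j _
        calc (s * F (θp j)) * |r j| ≤ (s * F (θp j)) * 1 :=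
            mul_le_mul_of_nonneg_left (hrle j) (hg j).le
          _ = s * F (θp j) := mul_one _
      · refine ⟨1, Finset.mem_range.mpr (by omega), ?_⟩
        calc (s * F (θp 1)) * |r 1| < (s * F (θp 1)) * 1 :=
            mul_lt_mul_of_pos_left hr1 (hg 1)
          _ = s * F (θp 1) := mul_one _
    rw [hTN] at h6
    linarith
  · -- ODD CASE
    refine ⟨-1, by simp, ?_⟩
    set S := ∑ j ∈ Finset.range (n + 1), (a j : ℂ) * (-1) ^ j with hSdef
    have hrefl := Finset.sum_range_reflect (fun j => (a j : ℂ) * (-1) ^ j) (n + 1)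
    simp only [Nat.add_sub_cancel] at hrefl
    have hS : S = -S := by
      calc S = ∑ j ∈ Finset.range (n + 1), (a (n - j) : ℂ) * (-1) ^ (n - j) := hrefl.symm
        _ = ∑ j ∈ Finset.range (n + 1), -((a j : ℂ) * (-1) ^ j) := by
              apply Finset.sum_congr rfl
              intro j hj
              have hj' : j ≤ n := Nat.lt_succ_iff.mp (Finset.mem_range.mp hj)
              have ha' : a (n - j) = a j := (hsr j hj').symm
              have h1 : (-1:ℂ)^(n-j) * (-1)^j = (-1)^n := by
                rw [← pow_add, Nat.sub_add_cancel hj']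
              rw [Odd.neg_one_pow hodd] at h1
              have hsq : (-1:ℂ)^j * (-1)^j = 1 := by
                rw [← pow_add, ← two_mul, pow_mul]; norm_num
              have h2 : (-1:ℂ)^(n-j) = -(-1)^j := by
                linear_combination (-1:ℂ)^j * h1 - (-1:ℂ)^(n-j) * hsq
              rw [ha', h2]; ring
        _ = -S := by rw [hSdef, ← Finset.sum_neg_distrib]
    linear_combination hS / 2
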